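/- Let b > 0 and ε < 0, and let p = g_0 and q = g_ε be Laplace densities with scale b and locations 0 and ε respectively, where g_μ(x) = (1/(2b))·exp(−|x−μ|/b). Given an integer d ≥ 1 and group sizes m₁,…,m_d ∈ ℕ with N = m₁+…+m_d, define probability measures on ℝ^N (coordinates indexed by pairs (j,k), j ∈ {1,…,d}, k ∈ {1,…,m_j}): Q has density ∏_{j=1}^d ∏_{k=1}^{m_j} p(b_j^{(k)}), and P has density (1/d) ∑_{j=1}^d [∏_{k=1}^{m_j} q(b_j^{(k)})] · ∏_{j'≠j} ∏_{k=1}^{m_{j'}} p(b_{j'}^{(k)}). Then TV(P, Q) ≤ (1/(2√d)) · [ (1/d) ∑_{j=1}^d exp(−m_j ε/b) − 1 ]^{1/2}, and hence for any hypothesis test distinguishing Q from P the sum of the two error probabilities is at least 1 − (1/(2√d)) · [ (1/d) ∑_{j=1}^d exp(−m_j ε/b) − 1 ]^{1/2}. -/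

import Mathlib

open MeasureTheory

/-- Total variation distance between two measures:
`TV(P, Q) = sup over measurable sets s of |P s - Q s|`. -/
noncomputable def tvDist {Ω : Type*} [MeasurableSpace Ω] (P Q : Measure Ω) : ℝ :=
  ⨆ s : {s : Set Ω // MeasurableSet s}, |(P s.1).toReal - (Q s.1).toReal|

open Real Set

private lemma lap_base_integrable (b : ℝ) (hb : 0 < b) :
    Integrable (fun x : ℝ => Real.exp (-|x| / b)) := by
  have hIoi : IntegrableOn (fun x : ℝ => Real.exp (-|x| / b)) (Ioi 0) := by
    refine (exp_neg_integrableOn_Ioi 0 (inv_pos.mpr hb)).congr_fun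
      (fun x hx => ?_) measurableSet_Ioi
    rw [abs_of_pos hx]; ring_nf
  have hIic : IntegrableOn (fun x : ℝ => Real.exp (-|x| / b)) (Iic 0) := by
    rw [← Measure.map_neg_eq_self (volume : Measure ℝ)]
    have m : MeasurableEmbedding fun x : ℝ => -x := (Homeomorph.neg ℝ).measurableEmbedding
    rw [m.integrableOn_map_iff]
    simp_rw [Function.comp_def, abs_neg, neg_preimage, neg_Iic, neg_zero]
    exact (integrableOn_Ici_iff_integrableOn_Ioi (f := fun x : ℝ => Real.exp (-|x| / b))).mpr hIoi
  have := hIic.union hIoi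
  rwa [Iic_union_Ioi, integrableOn_univ] at this

private lemma lap_integrable (b μ : ℝ) (hb : 0 < b) :
    Integrable (fun x : ℝ => Real.exp (-|x - μ| / b)) := by
  simpa using (lap_base_integrable b hb).comp_sub_right μ

private lemma lap_integral (b μ : ℝ) (hb : 0 < b) :
    ∫ x : ℝ, Real.exp (-|x - μ| / b) = 2 * b := by
  rw [show (fun x : ℝ => Real.exp (-|x - μ| / b))
      = fun x => (fun y => Real.exp (-|y| / b)) (x - μ) from rfl,
    integral_sub_right_eq_self (fun y => Real.exp (-|y| / b)) μ]
  rw [integral_comp_abs (f := fun y => Real.exp (-y / b))]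
  have : ∀ x : ℝ, Real.exp (-x / b) = (fun y => Real.exp (-y)) (b⁻¹ * x) := by
    intro x; rw [neg_div]; field_simp
  simp_rw [this]
  rw [integral_comp_mul_left_Ioi (fun y => Real.exp (-y)) 0 (inv_pos.mpr hb)]
  simp [integral_exp_neg_Ioi, smul_eq_mul, integral_exp_Iic_zero]

private lemma withDensity_mass {α : Type*} [MeasurableSpace α] (μ : Measure α) (G : α → ℝ)
    (hG : Integrable G μ) (hG0 : ∀ x, 0 ≤ G x) (hG1 : ∫ x, G x ∂μ = 1) :
    (μ.withDensity fun x => ENNReal.ofReal (G x)) Set.univ = 1 := by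
  rw [withDensity_apply _ MeasurableSet.univ, Measure.restrict_univ,
    ← ofReal_integral_eq_lintegral_ofReal hG (Filter.Eventually.of_forall hG0), hG1,
    ENNReal.ofReal_one]

private lemma chi2_tv_aux {α : Type*} [MeasurableSpace α] (μ : Measure α) (F G : α → ℝ)
    (hFm : Measurable F) (hGm : Measurable G)
    (hF : Integrable F μ) (hG : Integrable G μ)
    (hF0 : ∀ x, 0 ≤ F x) (hG0 : ∀ x, 0 < G x)
    (hF1 : ∫ x, F x ∂μ = 1) (hG1 : ∫ x, G x ∂μ = 1)
    (hchi : Integrable (fun x => (F x - G x)^2 / G x) μ)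
    {s : Set α} (hs : MeasurableSet s) :
    |((μ.withDensity fun x => ENNReal.ofReal (F x)) s).toReal
      - ((μ.withDensity fun x => ENNReal.ofReal (G x)) s).toReal|
      ≤ (1/2) * Real.sqrt (∫ x, (F x - G x)^2 / G x ∂μ) := by
  have hPs : ((μ.withDensity fun x => ENNReal.ofReal (F x)) s).toReal = ∫ x in s, F x ∂μ := by
    rw [withDensity_apply _ hs,
      integral_eq_lintegral_of_nonneg_ae (Filter.Eventually.of_forall hF0)
        hFm.aestronglyMeasurable]
  have hQs : ((μ.withDensity fun x => ENNReal.ofReal (G x)) s).toReal = ∫ x in s, G x ∂μ := by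
    rw [withDensity_apply _ hs,
      integral_eq_lintegral_of_nonneg_ae (Filter.Eventually.of_forall (fun x => (hG0 x).le))
        hGm.aestronglyMeasurable]
  rw [hPs, hQs, ← integral_sub hF.integrableOn hG.integrableOn]
  have key : ∀ φ : α → ℝ, Integrable φ μ → (∫ x, φ x ∂μ) = 0 →
      ∫ x in s, φ x ∂μ ≤ (1/2) * ∫ x, |φ x| ∂μ := by
    intro φ hφ hφ0
    have hmax : Integrable (fun x => max (φ x) 0) μ := hφ.pos_part
    have h1 : ∫ x in s, φ x ∂μ ≤ ∫ x in s, max (φ x) 0 ∂μ :=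
      setIntegral_mono hφ.integrableOn hmax.integrableOn (fun x => le_max_left _ _)
    have h2 : ∫ x in s, max (φ x) 0 ∂μ ≤ ∫ x, max (φ x) 0 ∂μ :=
      setIntegral_le_integral hmax (Filter.Eventually.of_forall (fun x => le_max_right _ _))
    have h3 : ∫ x, max (φ x) 0 ∂μ = (1/2) * ∫ x, |φ x| ∂μ := by
      have : (fun x => max (φ x) 0) = fun x => (|φ x| + φ x) / 2 := by
        funext x
        rcases le_or_gt 0 (φ x) with h | h
        · rw [max_eq_left h, abs_of_nonneg h]; ring
        · rw [max_eq_right h.le, abs_of_neg h]; ring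
      rw [this, integral_div, integral_add hφ.abs hφ, hφ0]
      ring
    linarith
  have habs : |∫ x in s, (F x - G x) ∂μ| ≤ (1/2) * ∫ x, |F x - G x| ∂μ := by
    have hFG : Integrable (fun x => F x - G x) μ := hF.sub hG
    have hFG0 : (∫ x, (F x - G x) ∂μ) = 0 := by
      rw [integral_sub hF hG, hF1, hG1]; ring
    refine abs_le.mpr ⟨?_, key _ hFG hFG0⟩
    have := key (fun x => -(F x - G x)) hFG.neg (by rw [integral_neg, hFG0]; ring)
    simp only [integral_neg, abs_neg] at this
    linarith
  have hCS : ∫ x, |F x - G x| ∂μ ≤ Real.sqrt (∫ x, (F x - G x)^2 / G x ∂μ) := by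
    set D : ℝ := ∫ x, (F x - G x)^2 / G x ∂μ with hD
    have hD0 : 0 ≤ D :=
      integral_nonneg (fun x => div_nonneg (sq_nonneg _) (hG0 x).le)
    have hu : Measurable fun x => |F x - G x| / Real.sqrt (G x) :=
      ((hFm.sub hGm).abs).div hGm.sqrt
    have hv : Measurable fun x => Real.sqrt (G x) := hGm.sqrt
    have h22 : (2:ℝ).HolderConjugate 2 := by constructor <;> norm_num
    have hH := ENNReal.lintegral_mul_le_Lp_mul_Lq μ h22
      ((ENNReal.measurable_ofReal.comp hu).aemeasurable)
      ((ENNReal.measurable_ofReal.comp hv).aemeasurable)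
    simp only [Function.comp_def] at hH
    have hlhs : ∫⁻ x, ((fun x => ENNReal.ofReal (|F x - G x| / Real.sqrt (G x))) *
        (fun x => ENNReal.ofReal (Real.sqrt (G x)))) x ∂μ
        = ∫⁻ x, ENNReal.ofReal (|F x - G x|) ∂μ := by
      refine lintegral_congr fun x => ?_
      have hgx : Real.sqrt (G x) ≠ 0 := (Real.sqrt_pos.mpr (hG0 x)).ne'
      simp only [Pi.mul_apply]
      rw [← ENNReal.ofReal_mul (div_nonneg (abs_nonneg _) (Real.sqrt_nonneg _)),
        div_mul_cancel₀ _ hgx]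
    have hr1 : ∫⁻ x, (ENNReal.ofReal (|F x - G x| / Real.sqrt (G x))) ^ (2:ℝ) ∂μ
        = ENNReal.ofReal D := by
      rw [hD, ofReal_integral_eq_lintegral_ofReal hchi
        (Filter.Eventually.of_forall (fun x => div_nonneg (sq_nonneg _) (hG0 x).le))]
      refine lintegral_congr fun x => ?_
      rw [ENNReal.ofReal_rpow_of_nonneg (div_nonneg (abs_nonneg _) (Real.sqrt_nonneg _))
        (by norm_num)]
      congr 1
      rw [Real.rpow_two, div_pow, sq_abs, Real.sq_sqrt (hG0 x).le]
    have hr2 : ∫⁻ x, (ENNReal.ofReal (Real.sqrt (G x))) ^ (2:ℝ) ∂μ = 1 := by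
      have : ∀ x, (ENNReal.ofReal (Real.sqrt (G x))) ^ (2:ℝ) = ENNReal.ofReal (G x) := by
        intro x
        rw [ENNReal.ofReal_rpow_of_nonneg (Real.sqrt_nonneg _) (by norm_num), Real.rpow_two,
          Real.sq_sqrt (hG0 x).le]
      rw [lintegral_congr this,
        ← ofReal_integral_eq_lintegral_ofReal hG (Filter.Eventually.of_forall
          (fun x => (hG0 x).le)), hG1, ENNReal.ofReal_one]
    rw [hlhs, hr1, hr2, ENNReal.one_rpow, mul_one] at hH
    have hint : ∫ x, |F x - G x| ∂μ = (∫⁻ x, ENNReal.ofReal (|F x - G x|) ∂μ).toReal := by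
      rw [integral_eq_lintegral_of_nonneg_ae (f := fun x => |F x - G x|) (Filter.Eventually.of_forall (fun x => abs_nonneg _))
        ((hFm.sub hGm).abs).aestronglyMeasurable]
    rw [hint]
    calc (∫⁻ x, ENNReal.ofReal (|F x - G x|) ∂μ).toReal
        ≤ ((ENNReal.ofReal D) ^ ((1:ℝ)/2)).toReal := by
          refine ENNReal.toReal_mono ?_ hH
          exact ENNReal.rpow_ne_top_of_nonneg (by norm_num) ENNReal.ofReal_ne_top
      _ = Real.sqrt D := by
          rw [← ENNReal.toReal_rpow, ENNReal.toReal_ofReal hD0, Real.sqrt_eq_rpow]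
  calc |∫ x in s, (F x - G x) ∂μ| ≤ (1/2) * ∫ x, |F x - G x| ∂μ := habs
    _ ≤ (1/2) * Real.sqrt (∫ x, (F x - G x)^2 / G x ∂μ) := by linarith

theorem tv_bound_mixture_laplace (b ε : ℝ) (hb : 0 < b) (hε : ε < 0)
    (p q : ℝ → ℝ)
    (hp : ∀ x, p x = (1 / (2 * b)) * Real.exp (-|x - 0| / b))
    (hq : ∀ x, q x = (1 / (2 * b)) * Real.exp (-|x - ε| / b))
    (d : ℕ) (hd : 1 ≤ d) (m : Fin d → ℕ)
    (P Q : Measure (((j : Fin d) × Fin (m j)) → ℝ))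
    (hQ : Q = volume.withDensity fun b' => ENNReal.ofReal (∏ i, p (b' i)))
    (hP : P = volume.withDensity fun b' => ENNReal.ofReal
      ((1 / d : ℝ) * ∑ j : Fin d,
        (∏ k : Fin (m j), q (b' ⟨j, k⟩)) *
          ∏ j' ∈ Finset.univ.erase j, ∏ k : Fin (m j'), p (b' ⟨j', k⟩))) :
    tvDist P Q ≤
        (1 / (2 * Real.sqrt d)) *
          Real.sqrt ((1 / d : ℝ) * ∑ j, Real.exp (-(m j) * ε / b) - 1) ∧
      ∀ Ψ : (((j : Fin d) × Fin (m j)) → ℝ) → Bool, Measurable Ψ →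
        (P {x | Ψ x = true}).toReal + (Q {x | Ψ x = false}).toReal ≥
          1 - (1 / (2 * Real.sqrt d)) *
            Real.sqrt ((1 / d : ℝ) * ∑ j, Real.exp (-(m j) * ε / b) - 1) := by
  have hd0 : (0:ℝ) < d := by exact_mod_cast Nat.lt_of_lt_of_le Nat.zero_lt_one hd
  have hdne : (d:ℝ) ≠ 0 := hd0.ne'
  -- one-dimensional facts
  have hp0 : ∀ x, 0 < p x := fun x => by rw [hp]; positivity
  have hq0 : ∀ x, 0 < q x := fun x => by rw [hq]; positivity
  have hpf : p = fun x => (1 / (2 * b)) * Real.exp (-|x - 0| / b) := funext hp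
  have hqf : q = fun x => (1 / (2 * b)) * Real.exp (-|x - ε| / b) := funext hq
  have hpm : Measurable p := by rw [hpf]; fun_prop
  have hqm : Measurable q := by rw [hqf]; fun_prop
  have hpi : Integrable p := by rw [hpf]; exact (lap_integrable b 0 hb).const_mul _
  have hqi : Integrable q := by rw [hqf]; exact (lap_integrable b ε hb).const_mul _
  have hp1 : ∫ x, p x = 1 := by
    rw [hpf, MeasureTheory.integral_const_mul, lap_integral b 0 hb]
    field_simp
  have hq1 : ∫ x, q x = 1 := by
    rw [hqf, MeasureTheory.integral_const_mul, lap_integral b ε hb]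
    field_simp
  set C : ℝ := Real.exp (-ε / b) with hC
  have hC1 : 1 ≤ C := by
    rw [hC, show (1:ℝ) = Real.exp 0 from (Real.exp_zero).symm]
    apply Real.exp_le_exp.mpr
    exact div_nonneg (neg_nonneg.mpr hε.le) hb.le
  have hqle : ∀ x, q x ≤ C * p x := by
    intro x
    rw [hp, hq, show C * ((1 / (2*b)) * Real.exp (-|x - 0| / b))
      = (1 / (2*b)) * (Real.exp (-ε/b) * Real.exp (-|x - 0| / b)) by rw [hC]; ring]
    refine mul_le_mul_of_nonneg_left ?_ (by positivity)
    rw [← Real.exp_add]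
    apply Real.exp_le_exp.mpr
    rw [sub_zero, ← add_div, div_le_div_iff_of_pos_right hb]
    have h1 : |x| ≤ |x - ε| + |ε| := by
      calc |x| = |(x - ε) + ε| := by ring_nf
        _ ≤ |x - ε| + |ε| := abs_add_le _ _
    have h2 : |ε| = -ε := abs_of_neg hε
    linarith
  -- the function s = q^2/p
  set sf : ℝ → ℝ := fun x => q x ^ 2 / p x with hsf
  have hsm : Measurable sf := ((hqm.pow_const 2).div hpm)
  have hsf0 : ∀ x, 0 ≤ sf x := fun x => div_nonneg (sq_nonneg _) (hp0 x).le
  have hsfle : ∀ x, sf x ≤ C * q x := by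
    intro x
    show q x ^ 2 / p x ≤ C * q x
    rw [sq, mul_div_assoc]
    calc q x * (q x / p x) ≤ q x * C := by
          refine mul_le_mul_of_nonneg_left ?_ (hq0 x).le
          rw [div_le_iff₀ (hp0 x)]
          exact hqle x
      _ = C * q x := mul_comm _ _
  have hsi : Integrable sf := by
    refine (hqi.const_mul C).mono hsm.aestronglyMeasurable
      (Filter.Eventually.of_forall fun x => ?_)
    rw [Real.norm_eq_abs, Real.norm_eq_abs, abs_of_nonneg (hsf0 x),
      abs_of_nonneg (mul_nonneg (by linarith) (hq0 x).le)]
    exact hsfle x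
  have hs1 : ∫ x, sf x ≤ C := by
    calc ∫ x, sf x ≤ ∫ x, C * q x := integral_mono hsi (hqi.const_mul C) hsfle
      _ = C := by rw [MeasureTheory.integral_const_mul, hq1, mul_one]
  -- product space setup
  set r : (j : Fin d) → ((j : Fin d) × Fin (m j)) → ℝ → ℝ :=
    fun j i y => if i.1 = j then q y else p y with hrdef
  set G : (((j : Fin d) × Fin (m j)) → ℝ) → ℝ := fun x => ∏ i, p (x i) with hGdef
  set Fj : (j : Fin d) → (((j : Fin d) × Fin (m j)) → ℝ) → ℝ :=
    fun j x => ∏ i, r j i (x i) with hFjdef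
  set F : (((j : Fin d) × Fin (m j)) → ℝ) → ℝ := fun x => (1 / d : ℝ) * ∑ j, Fj j x with hFdef
  -- coordinate facts
  have hr0 : ∀ j i y, 0 ≤ r j i y := fun j i y => by
    show (0:ℝ) ≤ if i.1 = j then q y else p y
    split_ifs
    exacts [(hq0 y).le, (hp0 y).le]
  have hri : ∀ j i, Integrable (r j i) := by
    intro j i
    show Integrable (fun y => if i.1 = j then q y else p y)
    by_cases h : i.1 = j
    · simpa only [if_pos h] using hqi
    · simpa only [if_neg h] using hpi
  have hr1 : ∀ j i, (∫ y, r j i y) = 1 := by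
    intro j i
    show (∫ y, if i.1 = j then q y else p y) = 1
    by_cases h : i.1 = j
    · simpa only [if_pos h] using hq1
    · simpa only [if_neg h] using hp1
  have hrm : ∀ j i, Measurable (r j i) := by
    intro j i
    show Measurable (fun y => if i.1 = j then q y else p y)
    by_cases h : i.1 = j
    · simpa only [if_pos h] using hqm
    · simpa only [if_neg h] using hpm
  -- G facts
  have hGm : Measurable G := Finset.measurable_prod _ (fun i _ => hpm.comp (measurable_pi_apply i))
  have hGi : Integrable G := Integrable.fintype_prod_dep (fun i => hpi)
  have hG0 : ∀ x, 0 < G x := fun x => Finset.prod_pos fun i _ => hp0 _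
  have hG1 : ∫ x, G x = 1 := by
    rw [show (∫ x, G x) = ∏ i : (j : Fin d) × Fin (m j), ∫ y, p y from
      integral_fintype_prod_eq_prod (fun _ => p)]
    exact Finset.prod_eq_one fun i _ => hp1
  -- Fj facts
  have hFji : ∀ j, Integrable (Fj j) := fun j => Integrable.fintype_prod_dep (fun i => hri j i)
  have hFjm : ∀ j, Measurable (Fj j) := fun j =>
    Finset.measurable_prod _ (fun i _ => (hrm j i).comp (measurable_pi_apply i))
  have hFj0 : ∀ j x, 0 ≤ Fj j x := fun j x => Finset.prod_nonneg fun i _ => hr0 j i (x i)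
  have hFj1 : ∀ j, ∫ x, Fj j x = 1 := by
    intro j
    rw [show (∫ x, Fj j x) = ∏ i : (j : Fin d) × Fin (m j), ∫ y, r j i y from
      integral_fintype_prod_eq_prod (r j)]
    exact Finset.prod_eq_one fun i _ => hr1 j i
  -- F facts
  have hFi : Integrable F := (integrable_finset_sum _ (fun j _ => hFji j)).const_mul _
  have hFm : Measurable F := measurable_const.mul (Finset.measurable_sum _ (fun j _ => hFjm j))
  have hF0 : ∀ x, 0 ≤ F x := fun x =>
    mul_nonneg (by positivity) (Finset.sum_nonneg fun j _ => hFj0 j x)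
  have hF1 : ∫ x, F x = 1 := by
    show (∫ x, (1 / d : ℝ) * ∑ j, Fj j x) = 1
    rw [MeasureTheory.integral_const_mul, integral_finset_sum _ (fun j _ => hFji j)]
    have : ∑ j : Fin d, ∫ x, Fj j x = (d:ℝ) := by
      rw [Finset.sum_congr rfl (fun j _ => hFj1 j), Finset.sum_const, Finset.card_univ,
        Fintype.card_fin, nsmul_eq_mul, mul_one]
    rw [this]
    field_simp
  -- density identifications
  have hQd : Q = volume.withDensity fun x => ENNReal.ofReal (G x) := hQ
  have hPd : P = volume.withDensity fun x => ENNReal.ofReal (F x) := by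
    rw [hP]
    congr 1
    funext x
    congr 1
    show (1 / d : ℝ) * ∑ j : Fin d, ((∏ k : Fin (m j), q (x ⟨j, k⟩)) *
        ∏ j' ∈ Finset.univ.erase j, ∏ k : Fin (m j'), p (x ⟨j', k⟩))
      = (1 / d : ℝ) * ∑ j, Fj j x
    congr 1
    refine Finset.sum_congr rfl fun j _ => ?_
    have hsig : Fj j x = ∏ j' : Fin d, ∏ k : Fin (m j'), r j ⟨j', k⟩ (x ⟨j', k⟩) := by
      show (∏ i : (j : Fin d) × Fin (m j), r j i (x i)) = _
      rw [← Finset.univ_sigma_univ, Finset.prod_sigma]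
    rw [hsig, ← Finset.mul_prod_erase Finset.univ _ (Finset.mem_univ j)]
    congr 1
    · refine Finset.prod_congr rfl fun k _ => ?_
      show q (x ⟨j, k⟩) = if j = j then q (x ⟨j, k⟩) else p (x ⟨j, k⟩)
      rw [if_pos rfl]
    · refine Finset.prod_congr rfl fun j' hj' => Finset.prod_congr rfl fun k _ => ?_
      show p (x ⟨j', k⟩) = if j' = j then q (x ⟨j', k⟩) else p (x ⟨j', k⟩)
      rw [if_neg (Finset.ne_of_mem_erase hj')]
  -- pointwise simplification of coordinate functions
  have hfqq : (fun y => q y * q y / p y) = sf := funext fun y => by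
    show q y * q y / p y = q y ^ 2 / p y
    rw [sq]
  have hfqp : (fun y => q y * p y / p y) = q := funext fun y => mul_div_cancel_right₀ (q y) (hp0 y).ne'
  have hfpq : (fun y => p y * q y / p y) = q := funext fun y => by
    rw [mul_comm]; exact mul_div_cancel_right₀ (q y) (hp0 y).ne'
  have hfpp : (fun y => p y * p y / p y) = p := funext fun y => mul_div_cancel_right₀ (p y) (hp0 y).ne'
  have hco : ∀ (j j' : Fin d) (i : (j : Fin d) × Fin (m j)),
      (fun y => r j i y * r j' i y / p y)
        = if i.1 = j then (if i.1 = j' then sf else q) else (if i.1 = j' then q else p) := by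
    intro j j' i
    show (fun y => (if i.1 = j then q y else p y) * (if i.1 = j' then q y else p y) / p y) = _
    by_cases h1 : i.1 = j
    · by_cases h2 : i.1 = j'
      · simp only [if_pos h1, if_pos h2]; exact hfqq
      · simp only [if_pos h1, if_neg h2]; exact hfqp
    · by_cases h2 : i.1 = j'
      · simp only [if_neg h1, if_pos h2]; exact hfpq
      · simp only [if_neg h1, if_neg h2]; exact hfpp
  -- integrability of the cross products
  have hHint : ∀ (j j' : Fin d),
      Integrable (fun x : ((j : Fin d) × Fin (m j)) → ℝ =>
        ∏ i, (r j i (x i) * r j' i (x i) / p (x i))) := by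
    intro j j'
    refine Integrable.fintype_prod_dep (f := fun i y => r j i y * r j' i y / p y) fun i => ?_
    show Integrable (fun y => r j i y * r j' i y / p y)
    rw [hco j j' i]
    split_ifs
    exacts [hsi, hqi, hqi, hpi]
  have hT : ∀ j j', (∫ x : ((j : Fin d) × Fin (m j)) → ℝ, ∏ i, (r j i (x i) * r j' i (x i) / p (x i)))
      = ∏ i : (j : Fin d) × Fin (m j), ∫ y, r j i y * r j' i y / p y :=
    fun j j' => integral_fintype_prod_eq_prod (fun i y => r j i y * r j' i y / p y)
  have hTne : ∀ j j', j ≠ j' →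
      (∫ x : ((j : Fin d) × Fin (m j)) → ℝ, ∏ i, (r j i (x i) * r j' i (x i) / p (x i))) = 1 := by
    intro j j' hne
    rw [hT j j']
    refine Finset.prod_eq_one fun i _ => ?_
    rw [show (fun y => r j i y * r j' i y / p y)
        = if i.1 = j then (if i.1 = j' then sf else q) else (if i.1 = j' then q else p) from
      hco j j' i]
    by_cases h1 : i.1 = j
    · have h2 : ¬ i.1 = j' := fun h => hne (h1.symm.trans h)
      rw [if_pos h1, if_neg h2]
      exact hq1
    · by_cases h2 : i.1 = j'
      · rw [if_neg h1, if_pos h2]; exact hq1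
      · rw [if_neg h1, if_neg h2]; exact hp1
  have hTj : ∀ j, (∫ x : ((j : Fin d) × Fin (m j)) → ℝ, ∏ i, (r j i (x i) * r j i (x i) / p (x i))) ≤ C ^ (m j) := by
    intro j
    rw [hT j j]
    calc ∏ i : (j : Fin d) × Fin (m j), ∫ y, r j i y * r j i y / p y
        ≤ ∏ i : (j : Fin d) × Fin (m j), (if i.1 = j then C else 1) := by
          refine Finset.prod_le_prod (fun i _ => ?_) (fun i _ => ?_)
          · exact integral_nonneg fun y =>
              div_nonneg (mul_nonneg (hr0 j i y) (hr0 j i y)) (hp0 y).le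
          · rw [show (fun y => r j i y * r j i y / p y)
                = if i.1 = j then (if i.1 = j then sf else q) else (if i.1 = j then q else p) from
              hco j j i]
            by_cases h1 : i.1 = j
            · rw [if_pos h1, if_pos h1, if_pos h1]
              exact hs1
            · rw [if_neg h1, if_neg h1, if_neg h1]
              rw [hp1]
      _ = C ^ (m j) := by
          rw [show (∏ i : (j : Fin d) × Fin (m j), (if i.1 = j then C else 1))
              = ∏ j' : Fin d, ∏ k : Fin (m j'),
                  (if (⟨j', k⟩ : (j : Fin d) × Fin (m j)).1 = j then C else 1) from by
            rw [← Finset.univ_sigma_univ, Finset.prod_sigma]]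
          have hinner : ∀ j' : Fin d, (∏ k : Fin (m j'),
              (if (⟨j', k⟩ : (j : Fin d) × Fin (m j)).1 = j then C else 1))
              = (if j' = j then C else 1) ^ (m j') := by
            intro j'
            have hk : ∀ k : Fin (m j'),
                (if (⟨j', k⟩ : (j : Fin d) × Fin (m j)).1 = j then C else 1)
                  = (if j' = j then C else 1) := fun k => rfl
            rw [Finset.prod_congr rfl fun k _ => hk k, Finset.prod_const, Finset.card_univ,
              Fintype.card_fin]
          rw [Finset.prod_congr rfl fun j' _ => hinner j']
          rw [Finset.prod_eq_single j (fun j' _ hne => by rw [if_neg hne, one_pow])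
            (fun h => absurd (Finset.mem_univ j) h), if_pos rfl]
  -- chi-square expansion
  have hFsq : ∀ x, F x ^ 2 / G x
      = (1/(d:ℝ))^2 * ∑ j, ∑ j', ∏ i, (r j i (x i) * r j' i (x i) / p (x i)) := by
    intro x
    show ((1 / d : ℝ) * ∑ j, Fj j x) ^ 2 / G x = _
    rw [mul_pow, pow_two (∑ j : Fin d, Fj j x), Finset.sum_mul_sum, mul_div_assoc,
      Finset.sum_div]
    congr 1
    refine Finset.sum_congr rfl fun j _ => ?_
    rw [Finset.sum_div]
    refine Finset.sum_congr rfl fun j' _ => ?_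
    show ((∏ i, r j i (x i)) * ∏ i, r j' i (x i)) / ∏ i, p (x i) = _
    rw [← Finset.prod_mul_distrib, ← Finset.prod_div_distrib]
  have hchi_eq : (fun x => (F x - G x)^2 / G x) = fun x =>
      (1/(d:ℝ))^2 * (∑ j, ∑ j', ∏ i, (r j i (x i) * r j' i (x i) / p (x i))) - 2 * F x + G x := by
    funext x
    have hGx : G x ≠ 0 := (hG0 x).ne'
    have h2 : (F x - G x)^2 / G x = F x ^ 2 / G x - 2 * F x + G x := by
      field_simp [hGx]
      ring
    rw [h2, hFsq x]
  have hSint : Integrable (fun x : ((j : Fin d) × Fin (m j)) → ℝ =>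
      (1/(d:ℝ))^2 * (∑ j, ∑ j', ∏ i, (r j i (x i) * r j' i (x i) / p (x i)))) :=
    (integrable_finset_sum _ fun j _ =>
      integrable_finset_sum _ fun j' _ => hHint j j').const_mul _
  have hchi_int : Integrable (fun x => (F x - G x)^2 / G x) := by
    rw [hchi_eq]
    exact (hSint.sub (hFi.const_mul 2)).add hGi
  have hchi_val : ∫ x, (F x - G x)^2 / G x
      ≤ (1/(d:ℝ)) * ((1/(d:ℝ)) * (∑ j, C ^ (m j)) - 1) := by
    rw [hchi_eq]
    have hf1 : Integrable (fun x : ((j : Fin d) × Fin (m j)) → ℝ =>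
        (1/(d:ℝ))^2 * (∑ j, ∑ j', ∏ i, (r j i (x i) * r j' i (x i) / p (x i))) - 2 * F x) :=
      hSint.sub (hFi.const_mul 2)
    have hf2 : Integrable (fun x : ((j : Fin d) × Fin (m j)) → ℝ => 2 * F x) :=
      hFi.const_mul 2
    rw [integral_add hf1 hGi]
    rw [integral_sub hSint hf2,
      MeasureTheory.integral_const_mul, MeasureTheory.integral_const_mul,
      integral_finset_sum _ (fun j _ => integrable_finset_sum _ fun j' _ => hHint j j'),
      hF1, hG1]
    have e2 : ∑ j : Fin d, ∫ x : ((j : Fin d) × Fin (m j)) → ℝ, ∑ j', ∏ i, (r j i (x i) * r j' i (x i) / p (x i))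
        = ∑ j : Fin d, ∑ j' : Fin d, ∫ x : ((j : Fin d) × Fin (m j)) → ℝ, ∏ i, (r j i (x i) * r j' i (x i) / p (x i)) :=
      Finset.sum_congr rfl fun j _ => integral_finset_sum _ (fun j' _ => hHint j j')
    rw [e2]
    have hsum : ∑ j : Fin d, ∑ j' : Fin d, (∫ x : ((j : Fin d) × Fin (m j)) → ℝ, ∏ i, (r j i (x i) * r j' i (x i) / p (x i)))
        ≤ ∑ j : Fin d, (C ^ (m j) + ((d:ℝ) - 1)) := by
      refine Finset.sum_le_sum fun j _ => ?_
      rw [← Finset.add_sum_erase Finset.univ _ (Finset.mem_univ j)]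
      refine add_le_add (hTj j) ?_
      rw [show (∑ j' ∈ Finset.univ.erase j,
            ∫ x : ((j : Fin d) × Fin (m j)) → ℝ, ∏ i, (r j i (x i) * r j' i (x i) / p (x i)))
          = ∑ j' ∈ Finset.univ.erase j, (1:ℝ) from
        Finset.sum_congr rfl fun j' hj' =>
          hTne j j' (fun h => (Finset.ne_of_mem_erase hj') h.symm)]
      rw [Finset.sum_const, Finset.card_erase_of_mem (Finset.mem_univ j), Finset.card_univ,
        Fintype.card_fin, nsmul_eq_mul, mul_one]
      rw [Nat.cast_sub hd]
      norm_num
    have hrw : ∑ j : Fin d, (C ^ (m j) + ((d:ℝ) - 1))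
        = (∑ j : Fin d, C ^ (m j)) + (d:ℝ) * ((d:ℝ) - 1) := by
      rw [Finset.sum_add_distrib, Finset.sum_const, Finset.card_univ, Fintype.card_fin,
        nsmul_eq_mul]
    have hfinal : (1/(d:ℝ))^2 * ((∑ j : Fin d, C ^ (m j)) + (d:ℝ) * ((d:ℝ) - 1)) - 2 * 1 + 1
        = (1/(d:ℝ)) * ((1/(d:ℝ)) * (∑ j, C ^ (m j)) - 1) := by
      field_simp
      ring
    have hstep : (1/(d:ℝ))^2 * (∑ j : Fin d, ∑ j' : Fin d,
          ∫ x : ((j : Fin d) × Fin (m j)) → ℝ, ∏ i, (r j i (x i) * r j' i (x i) / p (x i)))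
        ≤ (1/(d:ℝ))^2 * ((∑ j : Fin d, C ^ (m j)) + (d:ℝ) * ((d:ℝ) - 1)) := by
      rw [← hrw]
      exact mul_le_mul_of_nonneg_left hsum (by positivity)
    linarith
  -- convert to the statement's exponentials
  have hCE : ∀ j, C ^ (m j) = Real.exp (-(m j : ℝ) * ε / b) := by
    intro j
    rw [hC, ← Real.exp_nat_mul]
    congr 1
    ring
  set A : ℝ := (1 / d : ℝ) * ∑ j, Real.exp (-(m j : ℝ) * ε / b) - 1 with hA
  have hDle : ∫ x, (F x - G x)^2 / G x ≤ (1/(d:ℝ)) * A := by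
    refine hchi_val.trans (le_of_eq ?_)
    rw [hA, Finset.sum_congr rfl fun j _ => hCE j]
  have hbound : ∀ s : Set (((j : Fin d) × Fin (m j)) → ℝ), MeasurableSet s →
      |(P s).toReal - (Q s).toReal| ≤ (1 / (2 * Real.sqrt d)) * Real.sqrt A := by
    intro s hs
    rw [hPd, hQd]
    refine (chi2_tv_aux volume F G hFm hGm hFi hGi hF0 hG0 hF1 hG1 hchi_int hs).trans ?_
    have h1 : Real.sqrt (∫ x, (F x - G x)^2 / G x) ≤ Real.sqrt ((1/(d:ℝ)) * A) :=
      Real.sqrt_le_sqrt hDle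
    have h2 : Real.sqrt ((1/(d:ℝ)) * A) = (1/Real.sqrt d) * Real.sqrt A := by
      rw [Real.sqrt_mul (by positivity) A, one_div, one_div, Real.sqrt_inv]
    have hsd : 0 < Real.sqrt d := Real.sqrt_pos.mpr hd0
    calc (1/2) * Real.sqrt (∫ x, (F x - G x)^2 / G x)
        ≤ (1/2) * ((1/Real.sqrt d) * Real.sqrt A) := by
          refine mul_le_mul_of_nonneg_left (h1.trans_eq h2) (by norm_num)
      _ = (1 / (2 * Real.sqrt d)) * Real.sqrt A := by
          field_simp
  constructor
  · haveI : Nonempty {s : Set (((j : Fin d) × Fin (m j)) → ℝ) // MeasurableSet s} :=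
      ⟨⟨∅, MeasurableSet.empty⟩⟩
    exact ciSup_le fun s => hbound s.1 s.2
  · intro Ψ hΨ
    have hQuniv : Q Set.univ = 1 := by
      rw [hQd]
      exact withDensity_mass volume G hGi (fun x => (hG0 x).le) hG1
    have ht : MeasurableSet {x | Ψ x = true} := hΨ (measurableSet_singleton true)
    have hfc : {x | Ψ x = false} = {x | Ψ x = true}ᶜ := by
      ext x
      simp [Bool.not_eq_true]
    have hQtop : Q {x | Ψ x = true} ≠ ⊤ := by
      refine ne_top_of_le_ne_top ?_ (measure_mono (Set.subset_univ _))
      rw [hQuniv]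
      exact ENNReal.one_ne_top
    have hQc : (Q {x | Ψ x = false}).toReal = 1 - (Q {x | Ψ x = true}).toReal := by
      rw [hfc, measure_compl ht hQtop, hQuniv,
        ENNReal.toReal_sub_of_le (by rw [← hQuniv]; exact measure_mono (Set.subset_univ _))
          ENNReal.one_ne_top, ENNReal.toReal_one]
    have hb1 := hbound _ ht
    have := abs_le.mp hb1
    rw [hQc]
    linarith [this.1]
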